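/- The system response matrices Φ_xw = (I − ZA − ZBKC)^{-1}, Φ_xe = Φ_xw ZBK, Φ_uw = KC Φ_xw, Φ_ue = KC Φ_xw ZBK + K satisfy Φ [[I − ZA],[−C]] = [[I],[0]], where Φ = [[Φ_xw, Φ_xe],[Φ_uw, Φ_ue]]. -/
import Mathlib

theorem stmt5 {X U Y : Type*} [Fintype X] [Fintype U] [Fintype Y]
    [DecidableEq X] [DecidableEq U] [DecidableEq Y]
    (Z A : Matrix X X ℝ) (B : Matrix X U ℝ) (K : Matrix U Y ℝ) (C : Matrix Y X ℝ)
    (hM : IsUnit (1 - Z * A - Z * B * K * C))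
    (Φxw : Matrix X X ℝ) (Φxe : Matrix X Y ℝ) (Φuw : Matrix U X ℝ) (Φue : Matrix U Y ℝ)
    (hxw : Φxw = (1 - Z * A - Z * B * K * C)⁻¹)
    (hxe : Φxe = Φxw * (Z * B * K))
    (huw : Φuw = K * C * Φxw)
    (hue : Φue = K * C * Φxw * (Z * B * K) + K) :
    Matrix.fromBlocks Φxw Φxe Φuw Φue * Matrix.fromRows (1 - Z * A) (-C)
      = Matrix.fromRows 1 0 := by
  have hdet : IsUnit (1 - Z * A - Z * B * K * C).det :=
    (Matrix.isUnit_iff_isUnit_det _).mp hM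
  have hinv : Φxw * (1 - Z * A - Z * B * K * C) = 1 := by
    rw [hxw]; exact Matrix.nonsing_inv_mul _ hdet
  rw [Matrix.fromBlocks_mul_fromRows, Matrix.fromRows_ext_iff]
  constructor
  · rw [hxe]
    have : Φxw * (1 - Z * A) + Φxw * (Z * B * K) * -C
        = Φxw * (1 - Z * A - Z * B * K * C) := by
      simp only [Matrix.mul_sub, Matrix.mul_neg, Matrix.mul_one, Matrix.mul_assoc]
      abel
    rw [this, hinv]
  · rw [huw, hue]
    have : K * C * Φxw * (1 - Z * A) + (K * C * Φxw * (Z * B * K) + K) * -C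
        = K * C * Φxw * (1 - Z * A - Z * B * K * C) - K * C := by
      simp only [Matrix.mul_sub, Matrix.mul_neg, Matrix.mul_one, Matrix.add_mul,
        Matrix.mul_assoc]
      abel
    rw [this, Matrix.mul_assoc, hinv, Matrix.mul_one, sub_self]
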